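/- For any classifier g = 2·1_C − 1 with μ(C) = u₀, the excess risk admits the representation L(g) − L(g*_{u₀}) = 2·E[ |η(X) − Q(η,1−u₀)| · 1_{C*_{u₀} Δ C}(X) ], where Δ denotes symmetric difference. -/

import Mathlib

open MeasureTheory Set

namespace LocalRanking

variable {Ω 𝒳 : Type*} [MeasurableSpace Ω] [MeasurableSpace 𝒳]

/-- The generalized-inverse `v`-quantile of a distribution `μ` on `ℝ`:
`Q(μ, v) = inf {t : F(t) ≥ v}`. -/
noncomputable def quantile (μ : Measure ℝ) (v : ℝ) : ℝ :=
  sInf {t : ℝ | v ≤ (μ (Iic t)).toReal}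

/-- Classification error `P(Y ≠ g(X))` of the classifier `g = 2·1_C − 1` built from a set `C`. -/
noncomputable def errSet (P : Measure Ω) (X : Ω → 𝒳) (Y : Ω → ℝ) (C : Set 𝒳) : ℝ :=
  (P {ω | (Y ω = 1 ∧ X ω ∉ C) ∨ (Y ω = -1 ∧ X ω ∈ C)}).toReal

/-- For any classifier `g = 2·1_C − 1` with `μ(C) = u₀`, the excess risk is
`L(g) − L(g*_{u₀}) = 2·E[|η(X) − Q(η,1−u₀)|·1_{C*_{u₀} Δ C}(X)]`. -/
theorem excess_risk_representation
    (P : Measure Ω) [IsProbabilityMeasure P]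
    (X : Ω → 𝒳) (Y : Ω → ℝ) (η : 𝒳 → ℝ)
    (hX : Measurable X) (hY : Measurable Y) (hηm : Measurable η)
    (hYval : ∀ ω, Y ω = 1 ∨ Y ω = -1)
    (hηbd : ∀ x, η x ∈ Icc (0 : ℝ) 1)
    (hη : ∀ A : Set 𝒳, MeasurableSet A →
      (P {ω | X ω ∈ A ∧ Y ω = 1}).toReal = ∫ x in A, η x ∂(P.map X))
    (u₀ q : ℝ) (hu₀ : u₀ ∈ Ioo (0 : ℝ) 1)
    (hq : q = quantile (P.map fun ω => η (X ω)) (1 - u₀))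
    (hmass_star : ((P.map X) {x | q ≤ η x}).toReal = u₀)
    (C : Set 𝒳) (hC : MeasurableSet C)
    (hmass : ((P.map X) C).toReal = u₀) :
    errSet P X Y C - errSet P X Y {x | q ≤ η x} =
      2 * ∫ x in symmDiff {x | q ≤ η x} C, |η x - q| ∂(P.map X) := by
  classical
  set μ : Measure 𝒳 := P.map X with hμ
  have hμprob : IsProbabilityMeasure μ := Measure.isProbabilityMeasure_map hX.aemeasurable
  set Cs : Set 𝒳 := {x | q ≤ η x} with hCsdef
  have hCsm : MeasurableSet Cs := measurableSet_le measurable_const hηm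
  have hint : Integrable η μ := by
    refine Integrable.mono' (integrable_const 1) hηm.aestronglyMeasurable ?_
    filter_upwards with x
    have h := hηbd x
    rw [Real.norm_eq_abs, abs_le]
    constructor <;> linarith [h.1, h.2]
  -- probability of Y = -1 on a set
  have key : ∀ A : Set 𝒳, MeasurableSet A →
      (P {ω | Y ω = -1 ∧ X ω ∈ A}).toReal = (μ A).toReal - ∫ x in A, η x ∂μ := by
    intro A hA
    have h1m : MeasurableSet (X ⁻¹' A ∩ Y ⁻¹' {1}) :=
      (hX hA).inter (hY (measurableSet_singleton 1))
    have h2m : MeasurableSet (X ⁻¹' A ∩ Y ⁻¹' {-1}) :=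
      (hX hA).inter (hY (measurableSet_singleton (-1)))
    have hsplit : (X ⁻¹' A) = (X ⁻¹' A ∩ Y ⁻¹' {1}) ∪ (X ⁻¹' A ∩ Y ⁻¹' {-1}) := by
      ext ω
      simp only [mem_union, mem_inter_iff, mem_preimage, mem_singleton_iff]
      constructor
      · intro h
        rcases hYval ω with h1 | h1
        · exact Or.inl ⟨h, h1⟩
        · exact Or.inr ⟨h, h1⟩
      · rintro (⟨h, _⟩ | ⟨h, _⟩) <;> exact h
    have hdisj : Disjoint (X ⁻¹' A ∩ Y ⁻¹' {1}) (X ⁻¹' A ∩ Y ⁻¹' {-1}) := by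
      rw [Set.disjoint_left]
      rintro ω ⟨_, h1⟩ ⟨_, h2⟩
      simp only [mem_preimage, mem_singleton_iff] at h1 h2
      rw [h1] at h2; norm_num at h2
    have hmA : μ A = P (X ⁻¹' A) := Measure.map_apply hX hA
    have hPu : P (X ⁻¹' A) = P (X ⁻¹' A ∩ Y ⁻¹' {1}) + P (X ⁻¹' A ∩ Y ⁻¹' {-1}) := by
      conv_lhs => rw [hsplit]
      exact measure_union hdisj h2m
    have hsum : (μ A).toReal
        = (P (X ⁻¹' A ∩ Y ⁻¹' {1})).toReal + (P (X ⁻¹' A ∩ Y ⁻¹' {-1})).toReal := by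
      rw [hmA, hPu, ENNReal.toReal_add (measure_ne_top _ _) (measure_ne_top _ _)]
    have hE1 : (X ⁻¹' A ∩ Y ⁻¹' {1}) = {ω | X ω ∈ A ∧ Y ω = 1} := by
      ext ω; simp [mem_inter_iff, mem_preimage]
    have hE2 : (X ⁻¹' A ∩ Y ⁻¹' {-1}) = {ω | Y ω = -1 ∧ X ω ∈ A} := by
      ext ω; simp [mem_inter_iff, mem_preimage, and_comm]
    rw [hE1, hE2, hη A hA] at hsum
    linarith
  -- formula for errSet
  have err_eq : ∀ A : Set 𝒳, MeasurableSet A →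
      errSet P X Y A = (∫ x, η x ∂μ) + (μ A).toReal - 2 * ∫ x in A, η x ∂μ := by
    intro A hA
    have hU : {ω | (Y ω = 1 ∧ X ω ∉ A) ∨ (Y ω = -1 ∧ X ω ∈ A)} =
        {ω | X ω ∈ Aᶜ ∧ Y ω = 1} ∪ {ω | Y ω = -1 ∧ X ω ∈ A} := by
      ext ω
      simp only [mem_union, mem_setOf_eq, mem_compl_iff]
      tauto
    have hm1 : MeasurableSet {ω | X ω ∈ Aᶜ ∧ Y ω = 1} := by
      have : {ω | X ω ∈ Aᶜ ∧ Y ω = 1} = X ⁻¹' Aᶜ ∩ Y ⁻¹' {1} := by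
        ext ω; simp [mem_inter_iff, mem_preimage]
      rw [this]
      exact (hX hA.compl).inter (hY (measurableSet_singleton 1))
    have hm2 : MeasurableSet {ω | Y ω = -1 ∧ X ω ∈ A} := by
      have : {ω | Y ω = -1 ∧ X ω ∈ A} = X ⁻¹' A ∩ Y ⁻¹' {-1} := by
        ext ω; simp [mem_inter_iff, mem_preimage, and_comm]
      rw [this]
      exact (hX hA).inter (hY (measurableSet_singleton (-1)))
    have hdisj : Disjoint {ω | X ω ∈ Aᶜ ∧ Y ω = 1} {ω | Y ω = -1 ∧ X ω ∈ A} := by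
      rw [Set.disjoint_left]
      rintro ω ⟨_, h1⟩ ⟨h2, _⟩
      rw [h1] at h2; norm_num at h2
    have hcompl : (∫ x in Aᶜ, η x ∂μ) = (∫ x, η x ∂μ) - ∫ x in A, η x ∂μ := by
      have := integral_add_compl hA hint
      linarith
    rw [errSet, hU, measure_union hdisj hm2,
      ENNReal.toReal_add (measure_ne_top _ _) (measure_ne_top _ _),
      hη Aᶜ hA.compl, key A hA]
    linarith [hcompl]
  -- difference of errors
  have hdiff : errSet P X Y C - errSet P X Y Cs
      = 2 * ((∫ x in Cs, η x ∂μ) - ∫ x in C, η x ∂μ) := by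
    rw [err_eq C hC, err_eq Cs hCsm, hmass, hmass_star]; ring
  -- split integrals over intersections and differences
  have hsplitCs : (∫ x in Cs ∩ C, η x ∂μ) + (∫ x in Cs \ C, η x ∂μ) = ∫ x in Cs, η x ∂μ :=
    integral_inter_add_diff hC hint.integrableOn
  have hsplitC : (∫ x in C ∩ Cs, η x ∂μ) + (∫ x in C \ Cs, η x ∂μ) = ∫ x in C, η x ∂μ :=
    integral_inter_add_diff hCsm hint.integrableOn
  have hmeasCs : (μ (Cs ∩ C)).toReal + (μ (Cs \ C)).toReal = u₀ := by
    rw [← ENNReal.toReal_add (measure_ne_top _ _) (measure_ne_top _ _),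
      measure_inter_add_diff Cs hC]
    exact hmass_star
  have hmeasC : (μ (C ∩ Cs)).toReal + (μ (C \ Cs)).toReal = u₀ := by
    rw [← ENNReal.toReal_add (measure_ne_top _ _) (measure_ne_top _ _),
      measure_inter_add_diff C hCsm]
    exact hmass
  have hab : (μ (Cs \ C)).toReal = (μ (C \ Cs)).toReal := by
    rw [inter_comm C Cs] at hmeasC
    linarith
  -- integrability of |η - q| pieces
  have hintq : Integrable (fun x => η x - q) μ := hint.sub (integrable_const q)
  -- integral over the symmetric difference
  have hsymm : symmDiff Cs C = (Cs \ C) ∪ (C \ Cs) := Set.symmDiff_def Cs C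
  have hd1 : MeasurableSet (Cs \ C) := hCsm.diff hC
  have hd2 : MeasurableSet (C \ Cs) := hC.diff hCsm
  have hdisj : Disjoint (Cs \ C) (C \ Cs) := disjoint_sdiff_sdiff
  have habs : (∫ x in symmDiff Cs C, |η x - q| ∂μ)
      = (∫ x in Cs \ C, |η x - q| ∂μ) + ∫ x in C \ Cs, |η x - q| ∂μ := by
    rw [hsymm]
    exact setIntegral_union hdisj hd2 hintq.abs.integrableOn hintq.abs.integrableOn
  have h1 : (∫ x in Cs \ C, |η x - q| ∂μ) = (∫ x in Cs \ C, η x ∂μ) - q * (μ (Cs \ C)).toReal := by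
    have hcg : (∫ x in Cs \ C, |η x - q| ∂μ) = ∫ x in Cs \ C, (η x - q) ∂μ := by
      refine setIntegral_congr_fun hd1 ?_
      intro x hx
      have : q ≤ η x := hx.1
      simp [abs_of_nonneg, sub_nonneg.mpr this]
    rw [hcg, integral_sub hint.integrableOn (integrable_const q).integrableOn,
      setIntegral_const]
    simp [smul_eq_mul, mul_comm, measureReal_def]
  have h2 : (∫ x in C \ Cs, |η x - q| ∂μ) = q * (μ (C \ Cs)).toReal - ∫ x in C \ Cs, η x ∂μ := by
    have hcg : (∫ x in C \ Cs, |η x - q| ∂μ) = ∫ x in C \ Cs, (q - η x) ∂μ := by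
      refine setIntegral_congr_fun hd2 ?_
      intro x hx
      have : ¬ q ≤ η x := hx.2
      have hle : η x ≤ q := le_of_not_ge this
      show |η x - q| = q - η x
      rw [abs_of_nonpos (by linarith), neg_sub]
    rw [hcg, integral_sub (integrable_const q).integrableOn hint.integrableOn,
      setIntegral_const]
    simp [smul_eq_mul, mul_comm, measureReal_def]
  rw [habs, h1, h2, hdiff, hab]
  rw [inter_comm C Cs] at hsplitC
  linarith
end LocalRanking
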